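/- Let $A_0$ be a commutative local ring, $q = p^n$, and $A = \bigoplus_{i \in \mathbb{Z}/q\mathbb{Z}} A_0 e_i$ the $A_0$-algebra defined by a normalized symmetric cocycle $(\alpha_{ij})$ of non-zero-divisors. For a linear form $\varphi = \sum_m \varphi_m e_m^* \in \mathrm{Hom}_{A_0}(A, A_0)$, the dual module $A^* = \mathrm{Hom}_{A_0}(A,A_0)$ with $A$-action $(a\cdot\theta)(x) = \theta(ax)$ is generated by $\varphi$ if and only if the matrix $M(\varphi) = (\alpha_{ij}\varphi_{i+j})_{i,j}$ is invertible over $A_0$. Moreover $e_i \cdot e_j^* = \alpha_{i, j-i}\, e_{j-i}^*$ for all $i,j$. -/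

import Mathlib

/-- for the twisted group algebra `A = ⊕_i A₀ e_i` of `ℤ/qℤ` (`q = pⁿ`)
over a local ring `A₀`, with dual basis `(e_i^*)` of `A* = Hom_{A₀}(A, A₀)` and the
`A`-action `(a·θ)(x) = θ(ax)`: one has `e_i · e_j^* = α_{i,j-i} e_{j-i}^*`, and a
linear form `φ` generates `A*` as an `A`-module iff the matrix
`M(φ) = (α_{ij} φ_{i+j})` is invertible over `A₀`. -/
theorem stmt18 {A₀ A : Type*} [CommRing A₀] [IsLocalRing A₀] [CommRing A] [Algebra A₀ A]
    {p n : ℕ} (hp : p.Prime) (q : ℕ) (hq : q = p ^ n) [NeZero q]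
    (e : ZMod q → A) (α : ZMod q → ZMod q → A₀)
    (b : Module.Basis (ZMod q) A₀ A) (hb : ∀ i, b i = e i) (he0 : e 0 = 1)
    (hmul : ∀ i j, e i * e j = algebraMap A₀ A (α i j) * e (i + j))
    (hreg : ∀ i j, α i j ∈ nonZeroDivisors A₀)
    (hnorm : ∀ j, α 0 j = 1)
    (hsymm : ∀ i j, α i j = α j i)
    (hcoc : ∀ i j l, α i j * α (i + j) l = α j l * α i (j + l)) :
    (∀ (i j : ZMod q) (x : A),
      b.dualBasis j (e i * x) = α i (j - i) * b.dualBasis (j - i) x) ∧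
    (∀ φ : Module.Dual A₀ A,
      (∀ θ : Module.Dual A₀ A, ∃ a : A, ∀ x : A, θ x = φ (a * x)) ↔
        IsUnit (Matrix.of fun i j : ZMod q => α i j * φ (e (i + j)))) := by
  constructor
  · -- part 1
    intro i j x
    have key : ((b.dualBasis j).comp (LinearMap.mulLeft A₀ (e i)) : A →ₗ[A₀] A₀)
        = α i (j - i) • b.dualBasis (j - i) := by
      apply b.ext
      intro k
      simp only [LinearMap.comp_apply, LinearMap.mulLeft_apply, LinearMap.smul_apply,
        smul_eq_mul, hb]
      rw [hmul, ← Algebra.smul_def, map_smul, smul_eq_mul, ← hb (i + k),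
        Module.Basis.dualBasis_apply_self, ← hb k, Module.Basis.dualBasis_apply_self]
      by_cases h : k = j - i
      · subst h
        rw [if_pos rfl, if_pos (by ring)]
      · rw [if_neg h, if_neg (fun hc => h (by rw [← hc]; ring)), mul_zero, mul_zero]
    exact LinearMap.congr_fun key x
  · -- part 2
    intro φ
    set M : Matrix (ZMod q) (ZMod q) A₀ :=
      Matrix.of (fun i j : ZMod q => α i j * φ (e (i + j))) with hMdef
    have hM : ∀ i k : ZMod q, φ (e i * e k) = M i k := by
      intro i k
      rw [hmul, ← Algebra.smul_def, map_smul, smul_eq_mul]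
      rfl
    let f : A →ₗ[A₀] Module.Dual A₀ A :=
      { toFun := fun a => φ.comp (LinearMap.mulLeft A₀ a)
        map_add' := by
          intro a₁ a₂; ext x
          simp [add_mul]
        map_smul' := by
          intro c a; ext x
          simp [smul_mul_assoc] }
    have hf : ∀ (a x : A), f a x = φ (a * x) := fun a x => rfl
    have htm : LinearMap.toMatrix b b.dualBasis f = M.transpose := by
      ext k i
      rw [LinearMap.toMatrix_apply, Module.Basis.dualBasis_repr, Matrix.transpose_apply]
      rw [hf, hb, hb]
      exact hM i k
    have key : ∀ a : A, M.transpose.mulVec (b.equivFun a) = b.dualBasis.equivFun (f a) := by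
      intro a
      have h2 := LinearMap.toMatrix_mulVec_repr b b.dualBasis f a
      rw [htm] at h2
      rw [b.equivFun_apply a, b.dualBasis.equivFun_apply (f a), h2]
    have hcond : (∀ θ : Module.Dual A₀ A, ∃ a : A, ∀ x : A, θ x = φ (a * x)) ↔
        Function.Surjective f := by
      constructor
      · intro h θ
        obtain ⟨a, ha⟩ := h θ
        exact ⟨a, LinearMap.ext fun x => (ha x).symm⟩
      · intro h θ
        obtain ⟨a, ha⟩ := h θ
        exact ⟨a, fun x => by rw [← ha, hf]⟩
    have hsurj : Function.Surjective f ↔ Function.Surjective M.transpose.mulVec := by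
      constructor
      · intro h v
        obtain ⟨a, ha⟩ := h (b.dualBasis.equivFun.symm v)
        exact ⟨b.equivFun a, by
          rw [show (b.equivFun a : ZMod q → A₀) = b.equivFun a from rfl, key, ha,
            LinearEquiv.apply_symm_apply]⟩
      · intro h θ
        obtain ⟨v, hv⟩ := h (b.dualBasis.equivFun θ)
        refine ⟨b.equivFun.symm v, ?_⟩
        apply b.dualBasis.equivFun.injective
        rw [← key, LinearEquiv.apply_symm_apply, hv]
    rw [hcond, hsurj, Matrix.mulVec_surjective_iff_isUnit,
      Matrix.isUnit_iff_isUnit_det, Matrix.det_transpose, ← Matrix.isUnit_iff_isUnit_det]
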